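/- Fix a natural number k ≥ 1 and a real number ε with 0 ≤ ε < 1. For n ≥ k define E[N_n²] = ∑_{r=k}^{n} ∑_{e=0}^{∞} min((r+e)², n²) · C(r+e−1, e) ε^e (1−ε)^r · P_{M_n}(r), where P_{M_n}(r) = 2^{k−r} ∏_{l=0}^{n−r−1} (1 − 2^{l−(n−k)}). Then lim_{n→∞} E[N_n²] = ((k + c₀)² + (k + c₀)ε + c₀ + c₁)/(1 − ε)², where c₀ = ∑_{i=1}^{∞} 1/(2^i − 1) and c₁ = ∑_{i=1}^{∞} 1/(2^i − 1)². -/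

import Mathlib

open Filter

/-- The Erdős–Borwein constant `c₀ = ∑_{i=1}^{∞} 1/(2^i − 1)`. -/
noncomputable def c₀ : ℝ := ∑' i : ℕ, 1 / ((2 : ℝ) ^ (i + 1) - 1)

/-- The digital search tree constant `c₁ = ∑_{i=1}^{∞} 1/(2^i − 1)²`. -/
noncomputable def c₁ : ℝ := ∑' i : ℕ, 1 / ((2 : ℝ) ^ (i + 1) - 1) ^ 2

/-- `P_{M_n}(r) = 2^{k−r} ∏_{l=0}^{n−r−1} (1 − 2^{l−(n−k)})`. -/
noncomputable def PM (k n r : ℕ) : ℝ :=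
  (2 : ℝ) ^ ((k : ℤ) - (r : ℤ)) *
    ∏ l ∈ Finset.range (n - r), (1 - (2 : ℝ) ^ ((l : ℤ) - ((n : ℤ) - (k : ℤ))))

namespace SecondMomentAux

/-- Partial products `Q N = ∏_{j=1}^{N} (1 - 2^{-j})`. -/
noncomputable def Q (N : ℕ) : ℝ := ∏ j ∈ Finset.range N, (1 - (2:ℝ)⁻¹ ^ (j+1))

lemma Q_zero : Q 0 = 1 := Finset.prod_range_zero _

lemma Q_succ (N : ℕ) : Q (N+1) = Q N * (1 - (2:ℝ)⁻¹ ^ (N+1)) := Finset.prod_range_succ _ _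

lemma half_pow_le_half (N : ℕ) : ((2:ℝ)⁻¹)^(N+1) ≤ 2⁻¹ := by
  calc ((2:ℝ)⁻¹)^(N+1) ≤ (2⁻¹:ℝ)^1 :=
        pow_le_pow_of_le_one (by norm_num) (by norm_num) (by omega)
    _ = 2⁻¹ := pow_one _

lemma half_pow_pos (N : ℕ) : (0:ℝ) < (2⁻¹:ℝ)^(N+1) := by positivity

lemma Q_pos (N : ℕ) : 0 < Q N := by
  refine Finset.prod_pos fun j _ => ?_
  have := half_pow_le_half j
  linarith

lemma Q_le_one (N : ℕ) : Q N ≤ 1 := by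
  refine Finset.prod_le_one (fun j _ => ?_) (fun j _ => ?_)
  · have := half_pow_le_half j; linarith
  · have := half_pow_pos j; linarith

lemma Q_anti : Antitone Q := by
  refine antitone_nat_of_succ_le fun N => ?_
  rw [Q_succ]
  have h1 := half_pow_pos N
  have h2 := Q_pos N
  nlinarith

lemma Q_ge (N : ℕ) : 1/4 + (2⁻¹:ℝ)^(N+1) ≤ Q N := by
  induction N with
  | zero => rw [Q_zero]; norm_num
  | succ N ih =>
      rcases Nat.eq_zero_or_pos N with rfl | hN
      · rw [Q_succ, Q_zero]; norm_num
      · rw [Q_succ]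
        have ht : (2⁻¹:ℝ)^(N+1) ≤ 1/4 := by
          calc (2⁻¹:ℝ)^(N+1) ≤ (2⁻¹:ℝ)^2 :=
              pow_le_pow_of_le_one (by norm_num) (by norm_num) (by omega)
          _ = 1/4 := by norm_num
        have ht0 := half_pow_pos N
        have hp : (2⁻¹:ℝ)^(N+1+1) = (2⁻¹:ℝ)^(N+1) * 2⁻¹ := pow_succ _ _
        nlinarith

lemma Q_ge_quarter (N : ℕ) : (4:ℝ)⁻¹ ≤ Q N := by
  have := Q_ge N; have := half_pow_pos N; linarith

/-- The limit `Q∞ = ∏_{j≥1} (1 - 2^{-j})`. -/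
noncomputable def Qinf : ℝ := ⨅ N, Q N

lemma Qinf_ge_quarter : (4:ℝ)⁻¹ ≤ Qinf := le_ciInf Q_ge_quarter

lemma Qinf_pos : 0 < Qinf := lt_of_lt_of_le (by norm_num) Qinf_ge_quarter

lemma Q_tendsto : Tendsto Q atTop (nhds Qinf) :=
  tendsto_atTop_ciInf Q_anti ⟨0, fun x hx => by obtain ⟨N, rfl⟩ := hx; exact (Q_pos N).le⟩

/-- `a N = 1/(2^{N+1} - 1)`. -/
noncomputable def a (N : ℕ) : ℝ := 1/((2:ℝ)^(N+1) - 1)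

lemma two_pow_lemma (N : ℕ) : (1:ℝ) < (2:ℝ)^(N+1) := by
  have : (2:ℝ)^(N+1) ≥ 2^1 := pow_le_pow_right₀ (by norm_num) (by omega)
  norm_num at this ⊢; linarith

lemma a_pos (N : ℕ) : 0 < a N := by
  have := two_pow_lemma N
  have : (0:ℝ) < (2:ℝ)^(N+1) - 1 := by linarith
  exact div_pos one_pos this

lemma a_le (N : ℕ) : a N ≤ (2⁻¹:ℝ)^N * 2 := by
  have h2 : ((2:ℝ))^(N+1) - 1 ≥ 2^N := by
    have : (2:ℝ)^(N+1) = 2^N * 2 := pow_succ _ _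
    have hN : (1:ℝ) ≤ 2^N := one_le_pow₀ (by norm_num)
    nlinarith
  have hpos : (0:ℝ) < 2^N := by positivity
  have := two_pow_lemma N
  rw [a, div_le_iff₀ (by linarith)]
  calc (1:ℝ) ≤ (2⁻¹:ℝ)^N * 2^N * 2 := by
        rw [← mul_pow]; norm_num
    _ ≤ (2⁻¹:ℝ)^N * 2 * ((2:ℝ)^(N+1) - 1) := by
        have h1 : (0:ℝ) ≤ (2⁻¹:ℝ)^N := by positivity
        nlinarith

lemma summable_a : Summable a :=
  Summable.of_nonneg_of_le (fun N => (a_pos N).le) a_le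
    ((summable_geometric_of_lt_one (by norm_num) (by norm_num)).mul_right 2)

lemma a_mul_Q (N : ℕ) : a N * Q (N+1) = (2⁻¹:ℝ)^(N+1) * Q N := by
  have h := two_pow_lemma N
  have hx : (2⁻¹:ℝ)^(N+1) = ((2:ℝ)^(N+1))⁻¹ := by rw [inv_pow]
  rw [Q_succ, a, hx]
  have h2 : ((2:ℝ)^(N+1)) ≠ 0 := by positivity
  have h3 : ((2:ℝ)^(N+1)) - 1 ≠ 0 := by linarith
  field_simp



/-- `x_N = 2^{-(N+1)}`. -/
noncomputable def xN (N : ℕ) : ℝ := (2⁻¹:ℝ)^(N+1)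

lemma xN_pos (N : ℕ) : 0 < xN N := half_pow_pos N
lemma xN_le_half (N : ℕ) : xN N ≤ 2⁻¹ := half_pow_le_half N
lemma xN_succ (N : ℕ) : xN (N+1) = xN N * 2⁻¹ := pow_succ _ _
lemma xN_tendsto : Tendsto xN atTop (nhds 0) := by
  have h := tendsto_pow_atTop_nhds_zero_of_lt_one (r := (2⁻¹:ℝ)) (by norm_num) (by norm_num)
  exact (h.comp (tendsto_add_atTop_nat 1))

lemma Q_succ' (N : ℕ) : Q (N+1) = Q N * (1 - xN N) := Q_succ N

lemma Q_inv_le (m : ℕ) : (Q m)⁻¹ ≤ 4 := by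
  rw [inv_le_comm₀ (Q_pos m) (by norm_num)]
  simpa using Q_ge_quarter m

/-- `G t N = ∑_m m^t x_N^m / Q_m`. -/
noncomputable def G (t N : ℕ) : ℝ := ∑' m : ℕ, (m:ℝ)^t * xN N ^ m / Q m

lemma G_term_nonneg (t N m : ℕ) : 0 ≤ (m:ℝ)^t * xN N ^ m / Q m := by
  have := (xN_pos N); have := Q_pos m; positivity

lemma G_term_le (t N m : ℕ) :
    (m:ℝ)^t * xN N ^ m / Q m ≤ 4 * ((m:ℝ)^t * (2⁻¹:ℝ)^m) := by
  have h1 : xN N ^ m ≤ (2⁻¹:ℝ)^m :=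
    pow_le_pow_left₀ (xN_pos N).le (xN_le_half N) m
  have h2 : (m:ℝ)^t * xN N ^ m ≤ (m:ℝ)^t * (2⁻¹:ℝ)^m :=
    mul_le_mul_of_nonneg_left h1 (by positivity)
  calc (m:ℝ)^t * xN N ^ m / Q m = (m:ℝ)^t * xN N ^ m * (Q m)⁻¹ := div_eq_mul_inv _ _
    _ ≤ (m:ℝ)^t * (2⁻¹:ℝ)^m * 4 := by
        refine mul_le_mul h2 (Q_inv_le m) (inv_nonneg.mpr (Q_pos m).le) (by positivity)
    _ = 4 * ((m:ℝ)^t * (2⁻¹:ℝ)^m) := by ring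

lemma summable_base (t : ℕ) : Summable (fun m : ℕ => (m:ℝ)^t * (2⁻¹:ℝ)^m) :=
  summable_pow_mul_geometric_of_norm_lt_one t (by rw [Real.norm_eq_abs, abs_lt]; constructor <;> norm_num)

lemma summable_G (t N : ℕ) : Summable (fun m : ℕ => (m:ℝ)^t * xN N ^ m / Q m) :=
  Summable.of_nonneg_of_le (G_term_nonneg t N) (G_term_le t N)
    ((summable_base t).mul_left 4)

lemma hasSum_G (t N : ℕ) :
    HasSum (fun m : ℕ => (m:ℝ)^t * xN N ^ m / Q m) (G t N) := (summable_G t N).hasSum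

lemma Q_inv_diff (m : ℕ) : (Q (m+1))⁻¹ - (Q m)⁻¹ = (2⁻¹:ℝ)^(m+1) / Q (m+1) := by
  have h0 := (Q_pos m).ne'
  have h1 := (Q_pos (m+1)).ne'
  set x : ℝ := (2⁻¹:ℝ)^(m+1) with hxdef
  have hQs : Q (m+1) = Q m * (1 - x) := Q_succ m
  rw [hQs] at h1 ⊢
  have hf : (1 - x) ≠ 0 := right_ne_zero_of_mul h1
  field_simp
  ring

lemma G_nonneg (t N : ℕ) : 0 ≤ G t N := tsum_nonneg (G_term_nonneg t N)

/-- Key termwise identity converting shifted differences to the next level. -/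
lemma term_identity (t N m : ℕ) :
    ((m:ℝ)+1)^t * xN N ^ (m+1) / Q (m+1) - xN N * ((m:ℝ)^t * xN N ^ m / Q m)
      - xN N * (((m:ℝ)+1)^t - (m:ℝ)^t) * (xN N ^ m / Q m)
    = ((m:ℝ)+1)^t * xN (N+1) ^ (m+1) / Q (m+1) := by
  have h0 := (Q_pos m).ne'
  have h1 := (Q_pos (m+1)).ne'
  have hd := Q_inv_diff m
  have hx : xN (N+1) ^ (m+1) = xN N ^ (m+1) * (2⁻¹:ℝ)^(m+1) := by
    rw [xN_succ, mul_pow]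
  calc ((m:ℝ)+1)^t * xN N ^ (m+1) / Q (m+1) - xN N * ((m:ℝ)^t * xN N ^ m / Q m)
      - xN N * (((m:ℝ)+1)^t - (m:ℝ)^t) * (xN N ^ m / Q m)
      = ((m:ℝ)+1)^t * xN N ^ (m+1) * ((Q (m+1))⁻¹ - (Q m)⁻¹) := by
        rw [pow_succ]
        have h0' : Q m ≠ 0 := h0
        have h1' : Q (m+1) ≠ 0 := h1
        field_simp <;> ring
    _ = ((m:ℝ)+1)^t * xN N ^ (m+1) * ((2⁻¹:ℝ)^(m+1) / Q (m+1)) := by rw [hd]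
    _ = ((m:ℝ)+1)^t * xN (N+1) ^ (m+1) / Q (m+1) := by rw [hx]; ring


/-- Generic functional equation for `G t`. -/
lemma G_FE (t N : ℕ) (C : ℝ)
    (hC : HasSum (fun m : ℕ => xN N * (((m:ℝ)+1)^t - (m:ℝ)^t) * (xN N ^ m / Q m)) C) :
    G t (N+1) = (1 - xN N) * G t N - C := by
  have h := hasSum_G t N
  have hs : HasSum (fun m : ℕ => ((m:ℝ)+1)^t * xN N ^ (m+1) / Q (m+1))
      (G t N - (0:ℝ)^t) := by
    have h' : HasSum (fun m : ℕ => (((m+1:ℕ)):ℝ)^t * xN N ^ (m+1) / Q (m+1))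
        (G t N - (0:ℝ)^t) := by
      refine (hasSum_nat_add_iff (f := fun m : ℕ => (m:ℝ)^t * xN N ^ m / Q m) 1).mpr ?_
      have hv : (G t N - (0:ℝ)^t) + ∑ i ∈ Finset.range 1,
          ((i:ℝ)^t * xN N ^ i / Q i) = G t N := by
        rw [Finset.sum_range_one, Q_zero]
        simp
      rw [hv]; exact h
    refine h'.congr_fun fun m => by push_cast; ring
  have h2 := (hs.sub (h.mul_left (xN N))).sub hC
  have h2' : HasSum (fun m : ℕ => ((m:ℝ)+1)^t * xN (N+1) ^ (m+1) / Q (m+1))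
      ((G t N - (0:ℝ)^t) - xN N * G t N - C) := by
    refine h2.congr_fun fun m => (term_identity t N m).symm
  have h2'' : HasSum (fun m : ℕ => (((m+1:ℕ)):ℝ)^t * xN (N+1) ^ (m+1) / Q (m+1))
      ((G t N - (0:ℝ)^t) - xN N * G t N - C) :=
    h2'.congr_fun fun m => by push_cast; ring
  have h3 := (hasSum_nat_add_iff (f := fun m : ℕ => (m:ℝ)^t * xN (N+1) ^ m / Q m) 1).mp h2''
  rw [Finset.sum_range_one, Q_zero] at h3
  have := (hasSum_G t (N+1)).unique h3
  rw [this]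
  simp only [Nat.cast_zero, pow_zero, div_one]
  ring


lemma G0_FE (N : ℕ) : G 0 (N+1) = (1 - xN N) * G 0 N := by
  have h := G_FE 0 N 0 (by simpa using (hasSum_zero : HasSum (fun _ : ℕ => (0:ℝ)) 0))
  rw [h]; ring

lemma G1_FE (N : ℕ) : G 1 (N+1) = (1 - xN N) * G 1 N - xN N * G 0 N := by
  refine G_FE 1 N (xN N * G 0 N) ?_
  have := ((hasSum_G 0 N).mul_left (xN N))
  refine this.congr_fun fun m => by push_cast; ring

lemma G2_FE (N : ℕ) :
    G 2 (N+1) = (1 - xN N) * G 2 N - xN N * (2 * G 1 N + G 0 N) := by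
  refine G_FE 2 N (xN N * (2 * G 1 N + G 0 N)) ?_
  have h1 := ((hasSum_G 1 N).mul_left 2).add (hasSum_G 0 N)
  have h2 := h1.mul_left (xN N)
  refine h2.congr_fun fun m => by push_cast; ring

lemma one_sub_xN_pos (N : ℕ) : 0 < 1 - xN N := by
  have := xN_le_half N; linarith

lemma a_eq' (N : ℕ) : a N * (1 - xN N) = xN N := by
  have h := a_mul_Q N
  rw [Q_succ] at h
  have hQ := (Q_pos N).ne'
  have : (a N * (1 - xN N)) * Q N = xN N * Q N := by
    have hx : xN N = (2⁻¹:ℝ)^(N+1) := rfl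
    rw [hx]; linear_combination h
  exact mul_right_cancel₀ hQ this

/-- `K t = ∑ (m+1)^t 2^{-m}`. -/
noncomputable def K (t : ℕ) : ℝ := ∑' m : ℕ, ((m:ℝ)+1)^t * (2⁻¹:ℝ)^m

lemma summable_K (t : ℕ) : Summable (fun m : ℕ => ((m:ℝ)+1)^t * (2⁻¹:ℝ)^m) := by
  have h := (summable_base t).comp_injective (add_right_injective 1)
  have h2 : Summable (fun m : ℕ => (((m+1:ℕ)):ℝ)^t * (2⁻¹:ℝ)^(m+1)) := by
    refine h.congr fun m => by simp [Function.comp, add_comm]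
  have h3 := h2.mul_left 2
  refine h3.congr fun m => ?_
  push_cast
  rw [pow_succ]
  ring

lemma G_le (t N : ℕ) : G t N ≤ (0:ℝ)^t + 4 * K t * xN N := by
  unfold G
  rw [Summable.tsum_eq_zero_add (summable_G t N)]
  have h0 : ((0:ℕ):ℝ)^t * xN N ^ 0 / Q 0 = (0:ℝ)^t := by
    rw [Q_zero]; simp
  rw [h0]
  gcongr
  calc (∑' m : ℕ, (((m+1:ℕ)):ℝ)^t * xN N ^ (m+1) / Q (m+1))
      ≤ ∑' m : ℕ, 4 * xN N * (((m:ℝ)+1)^t * (2⁻¹:ℝ)^m) := by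
        refine Summable.tsum_le_tsum (fun m => ?_) ?_ (((summable_K t).mul_left _))
        · have hx := xN_pos N
          have hq := Q_pos (m+1)
          have h1 : xN N ^ (m+1) ≤ xN N * (2⁻¹:ℝ)^m := by
            rw [pow_succ']
            exact mul_le_mul_of_nonneg_left
              (pow_le_pow_left₀ (xN_pos N).le (xN_le_half N) m) hx.le
          have h2 : (Q (m+1))⁻¹ ≤ 4 := Q_inv_le (m+1)
          calc (((m+1:ℕ)):ℝ)^t * xN N ^ (m+1) / Q (m+1)
              = ((m:ℝ)+1)^t * xN N ^ (m+1) * (Q (m+1))⁻¹ := by push_cast; ring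
            _ ≤ ((m:ℝ)+1)^t * (xN N * (2⁻¹:ℝ)^m) * 4 := by
                refine mul_le_mul (mul_le_mul_of_nonneg_left h1 (by positivity)) h2
                  (inv_nonneg.mpr hq.le) (by positivity)
            _ = 4 * xN N * (((m:ℝ)+1)^t * (2⁻¹:ℝ)^m) := by ring
        · refine Summable.of_nonneg_of_le (fun m => ?_) (fun m => G_term_le t N (m+1)) ?_
          · exact G_term_nonneg t N (m+1)
          · exact (((summable_base t).comp_injective (add_right_injective 1)).mul_left 4).congr
              fun m => by
                simp [Function.comp]
                rw [add_comm (1:ℝ) (m:ℝ), Nat.add_comm 1 m]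
    _ = 4 * K t * xN N := by
        rw [tsum_mul_left, K]; ring

lemma K_nonneg (t : ℕ) : 0 ≤ K t := tsum_nonneg fun m => by positivity

lemma G0_val (N : ℕ) : G 0 N = Q N / Qinf := by
  have base : ∀ M, G 0 M = G 0 0 * Q M := by
    intro M
    induction M with
    | zero => rw [Q_zero]; ring
    | succ M ih => rw [G0_FE, ih, Q_succ']; ring
  have hub : Tendsto (fun N => (0:ℝ)^0 + 4 * K 0 * xN N) atTop (nhds 1) := by
    have := (xN_tendsto.const_mul (4 * K 0)).const_add ((0:ℝ)^0)
    simpa using this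
  have hlb : ∀ N, (1:ℝ) ≤ G 0 N := by
    intro N
    have h := Summable.le_tsum (summable_G 0 N) 0 (fun i _ => G_term_nonneg 0 N i)
    have h0 : ((0:ℕ):ℝ)^0 * xN N ^ 0 / Q 0 = 1 := by rw [Q_zero]; simp
    rw [h0] at h
    exact h
  have htend : Tendsto (fun N => G 0 N) atTop (nhds 1) := by
    refine tendsto_of_tendsto_of_tendsto_of_le_of_le tendsto_const_nhds hub hlb
      (fun N => G_le 0 N)
  have htend2 : Tendsto (fun N => G 0 0 * Q N) atTop (nhds (G 0 0 * Qinf)) :=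
    Q_tendsto.const_mul _
  have hG00 : G 0 0 * Qinf = 1 := by
    refine tendsto_nhds_unique (htend2.congr fun N => (base N).symm) htend
  have hQinf := Qinf_pos.ne'
  rw [base N, eq_div_iff hQinf]
  linear_combination Q N * hG00

lemma hasSum_a : HasSum a c₀ := by
  have := summable_a.hasSum
  rwa [show ∑' i, a i = c₀ from rfl] at this

noncomputable def cN (N : ℕ) : ℝ := c₀ - ∑ i ∈ Finset.range N, a i

lemma cN_tendsto : Tendsto cN atTop (nhds 0) := by
  have h := hasSum_a.tendsto_sum_nat
  have h2 := (tendsto_const_nhds (x := c₀) (f := atTop (α := ℕ))).sub h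
  rw [sub_self] at h2
  exact h2

lemma GQ_tendsto_zero (t : ℕ) (ht : 1 ≤ t) : Tendsto (fun N => G t N / Q N) atTop (nhds 0) := by
  have hub : Tendsto (fun N => 16 * K t * xN N) atTop (nhds 0) := by
    simpa using (xN_tendsto.const_mul (16 * K t))
  refine tendsto_of_tendsto_of_tendsto_of_le_of_le tendsto_const_nhds hub
    (fun N => div_nonneg (G_nonneg t N) (Q_pos N).le) (fun N => ?_)
  have h1 : G t N ≤ 4 * K t * xN N := by
    have := G_le t N
    rwa [zero_pow (by omega), zero_add] at this
  calc G t N / Q N = G t N * (Q N)⁻¹ := div_eq_mul_inv _ _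
    _ ≤ (4 * K t * xN N) * 4 := by
        refine mul_le_mul h1 (Q_inv_le N) (inv_nonneg.mpr (Q_pos N).le) ?_
        have := xN_pos N; have := K_nonneg t; positivity
    _ = 16 * K t * xN N := by ring

lemma G1_val (N : ℕ) : G 1 N = Q N * cN N / Qinf := by
  have hQinf := Qinf_pos.ne'
  have base : ∀ M, G 1 M = Q M * (G 1 0 - (c₀ - cN M) / Qinf) := by
    intro M
    induction M with
    | zero => simp [cN, Q_zero]
    | succ M ih =>
        rw [G1_FE, ih, G0_val, Q_succ']
        have hstep : cN (M+1) = cN M - a M := by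
          simp only [cN, Finset.sum_range_succ]; ring
        rw [hstep]
        have ha := a_eq' M
        linear_combination (Q M / Qinf) * ha
  have h1 : Tendsto (fun N => G 1 N / Q N) atTop (nhds 0) := GQ_tendsto_zero 1 le_rfl
  have h2 : Tendsto (fun N => G 1 0 - (c₀ - cN N) / Qinf) atTop
      (nhds (G 1 0 - (c₀ - 0) / Qinf)) := by
    refine Tendsto.const_sub _ (Tendsto.div_const (Tendsto.const_sub _ cN_tendsto) _)
  have h3 : Tendsto (fun N => G 1 N / Q N) atTop (nhds (G 1 0 - (c₀ - 0) / Qinf)) := by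
    refine h2.congr fun N => ?_
    rw [base N, mul_div_cancel_left₀ _ (Q_pos N).ne']
  have hval : G 1 0 - (c₀ - 0) / Qinf = 0 := tendsto_nhds_unique h3 h1
  have hG10 : G 1 0 = c₀ / Qinf := by rw [sub_eq_zero] at hval; rw [hval]; ring
  rw [base N, hG10]
  simp only [cN]
  ring


lemma cN_succ (M : ℕ) : cN (M+1) = cN M - a M := by
  simp only [cN, Finset.sum_range_succ]; ring

lemma a_le_one (N : ℕ) : a N ≤ 1 := by
  have h : (2:ℝ) ≤ (2:ℝ)^(N+1) := by
    calc (2:ℝ) = 2^1 := (pow_one _).symm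
      _ ≤ 2^(N+1) := pow_le_pow_right₀ (by norm_num) (by omega)
  rw [a, div_le_one (by linarith)]
  linarith

lemma summable_a_sq : Summable (fun i => a i ^ 2) := by
  refine Summable.of_nonneg_of_le (fun i => sq_nonneg _) (fun i => ?_) summable_a
  calc a i ^ 2 = a i * a i := sq (a i)
    _ ≤ 1 * a i := mul_le_mul_of_nonneg_right (a_le_one i) (a_pos i).le
    _ = a i := one_mul _

lemma hasSum_a_sq : HasSum (fun i => a i ^ 2) c₁ := by
  have h := summable_a_sq.hasSum
  have he : ∑' i, a i ^ 2 = c₁ := by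
    rw [show c₁ = ∑' i : ℕ, 1 / ((2 : ℝ) ^ (i + 1) - 1) ^ 2 from rfl]
    exact tsum_congr fun i => by rw [a, div_pow, one_pow]
  rwa [he] at h

/-- The accumulated telescoping term for the second moment. -/
noncomputable def DD (N : ℕ) : ℝ :=
  c₀^2 - (cN N)^2 + ∑ i ∈ Finset.range N, (a i^2 + a i)

lemma DD_succ (M : ℕ) : DD (M+1) = DD M + 2 * a M * cN M + a M := by
  simp only [DD, Finset.sum_range_succ, cN_succ]; ring

lemma cN_zero : cN 0 = c₀ := by simp [cN]

lemma DD_tendsto : Tendsto DD atTop (nhds (c₀^2 + (c₁ + c₀))) := by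
  have h1 : Tendsto (fun N => c₀^2 - (cN N)^2) atTop (nhds (c₀^2 - 0)) := by
    have := cN_tendsto.pow 2
    norm_num at this
    exact tendsto_const_nhds.sub this
  have h2 := (hasSum_a_sq.add hasSum_a).tendsto_sum_nat
  have := h1.add h2
  rw [sub_zero] at this
  exact this

lemma G2_val0 : G 2 0 = (c₀^2 + c₀ + c₁) / Qinf := by
  have hQinf := Qinf_pos.ne'
  have base : ∀ M, G 2 M = Q M * (G 2 0 - DD M / Qinf) := by
    intro M
    induction M with
    | zero => simp [DD, cN_zero, Q_zero]
    | succ M ih =>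
        rw [G2_FE, ih, G1_val, G0_val, Q_succ', DD_succ]
        have ha := a_eq' M
        linear_combination ((Q M / Qinf) * (2 * cN M + 1)) * ha
  have h1 : Tendsto (fun N => G 2 N / Q N) atTop (nhds 0) := GQ_tendsto_zero 2 (by omega)
  have h2 : Tendsto (fun N => G 2 0 - DD N / Qinf) atTop
      (nhds (G 2 0 - (c₀^2 + (c₁ + c₀)) / Qinf)) :=
    Tendsto.const_sub _ (DD_tendsto.div_const _)
  have h3 : Tendsto (fun N => G 2 N / Q N) atTop
      (nhds (G 2 0 - (c₀^2 + (c₁ + c₀)) / Qinf)) := by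
    refine h2.congr fun N => ?_
    rw [base N, mul_div_cancel_left₀ _ (Q_pos N).ne']
  have hval := tendsto_nhds_unique h3 h1
  rw [sub_eq_zero] at hval
  rw [hval]
  ring_nf

lemma xN_zero : xN 0 = (2⁻¹:ℝ) := by rw [show xN 0 = (2⁻¹:ℝ)^1 from rfl, pow_one]

lemma hasSum_u0 : HasSum (fun m : ℕ => (2⁻¹:ℝ)^m / Q m) (1 / Qinf) := by
  have h := hasSum_G 0 0
  rw [G0_val 0, Q_zero] at h
  exact h.congr_fun fun m => by rw [pow_zero, one_mul, xN_zero]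

lemma hasSum_u1 : HasSum (fun m : ℕ => (m:ℝ) * ((2⁻¹:ℝ)^m / Q m)) (c₀ / Qinf) := by
  have h := hasSum_G 1 0
  rw [G1_val 0, Q_zero, cN_zero, one_mul] at h
  exact h.congr_fun fun m => by rw [pow_one, xN_zero, mul_div_assoc]

lemma hasSum_u2 : HasSum (fun m : ℕ => (m:ℝ)^2 * ((2⁻¹:ℝ)^m / Q m))
    ((c₀^2 + c₀ + c₁) / Qinf) := by
  have h := hasSum_G 2 0
  rw [G2_val0] at h
  exact h.congr_fun fun m => by rw [xN_zero, mul_div_assoc]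


lemma choose_cast_identity (m e : ℕ) :
    (((m+1+e)^2 : ℕ) : ℝ) * ((e+m).choose m : ℝ)
      = ((m:ℝ)+1) * ((m:ℝ)+2) * ((e+m+2).choose (m+2) : ℝ)
        - ((m:ℝ)+1) * ((e+m+1).choose (m+1) : ℝ) := by
  have A := Nat.add_one_mul_choose_eq (e+m) m
  have B := Nat.add_one_mul_choose_eq (e+m+1) (m+1)
  have A' : ((e:ℝ)+m+1) * ((e+m).choose m : ℝ)
      = ((e+m+1).choose (m+1) : ℝ) * ((m:ℝ)+1) := by exact_mod_cast A
  have B' : ((e:ℝ)+m+2) * ((e+m+1).choose (m+1) : ℝ)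
      = ((e+m+2).choose (m+2) : ℝ) * ((m:ℝ)+2) := by exact_mod_cast B
  push_cast
  linear_combination ((m:ℝ)+1+e) * A' + ((m:ℝ)+1) * B'

lemma hasSum_negbinom_sq {ε : ℝ} (h0 : 0 ≤ ε) (h1 : ε < 1) (r : ℕ) (hr : 1 ≤ r) :
    HasSum (fun e : ℕ => (((r+e)^2 : ℕ) : ℝ) * ((r+e-1).choose e : ℝ) * ε^e * (1-ε)^r)
      (((r:ℝ)^2 + ε*(r:ℝ)) / (1-ε)^2) := by
  obtain ⟨m, rfl⟩ : ∃ m, r = m + 1 := ⟨r - 1, by omega⟩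
  have hε : ‖ε‖ < 1 := by rw [Real.norm_eq_abs, abs_of_nonneg h0]; exact h1
  have hne : (1:ℝ) - ε ≠ 0 := by linarith [h1]
  have hA := hasSum_choose_mul_geometric_of_norm_lt_one (m+1) hε
  have hB := hasSum_choose_mul_geometric_of_norm_lt_one (m+2) hε
  have combo := ((hB.mul_left (((m:ℝ)+1)*((m:ℝ)+2))).sub (hA.mul_left ((m:ℝ)+1))).mul_right
    ((1-ε)^(m+1))
  have hval : (((m:ℝ)+1)*((m:ℝ)+2) * (1 / (1-ε)^(m+2+1)) - ((m:ℝ)+1) * (1 / (1-ε)^(m+1+1)))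
      * (1-ε)^(m+1) = ((((m+1:ℕ)):ℝ)^2 + ε*(((m+1:ℕ)):ℝ)) / (1-ε)^2 := by
    have hp1 : (1-ε)^(m+2+1) = (1-ε)^(m+1) * (1-ε)^2 := by rw [← pow_add]
    have hp2 : (1-ε)^(m+1+1) = (1-ε)^(m+1) * (1-ε)^1 := by rw [← pow_add]
    rw [hp1, hp2]
    have hq : ((1-ε))^(m+1) ≠ 0 := pow_ne_zero _ hne
    field_simp
    push_cast
    ring
  rw [hval] at combo
  refine combo.congr_fun fun e => ?_
  have hch : (m+1+e-1).choose e = (e+m).choose m := by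
    rw [show m+1+e-1 = e+m from by omega]
    have h := Nat.choose_symm (show e ≤ e+m from by omega)
    rw [show e+m-e = m from by omega] at h
    exact h.symm
  rw [show e+(m+2) = e+m+2 from by ring, show e+(m+1) = e+m+1 from by ring, hch]
  linear_combination (ε^e * (1-ε)^(m+1)) * choose_cast_identity m e


section Trunc

variable {ε : ℝ}

/-- The truncated inner summand. -/
noncomputable def trm (ε : ℝ) (n r e : ℕ) : ℝ :=
  ((min ((r+e)^2) (n^2) : ℕ) : ℝ) * ((r+e-1).choose e : ℝ) * ε^e * (1-ε)^r

/-- The full (untruncated) inner summand. -/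
noncomputable def frm (ε : ℝ) (r e : ℕ) : ℝ :=
  (((r+e)^2 : ℕ) : ℝ) * ((r+e-1).choose e : ℝ) * ε^e * (1-ε)^r

lemma frm_nonneg (h0 : 0 ≤ ε) (h1 : ε < 1) (r e : ℕ) : 0 ≤ frm ε r e := by
  unfold frm
  have : (0:ℝ) ≤ 1 - ε := by linarith
  positivity

lemma trm_nonneg (h0 : 0 ≤ ε) (h1 : ε < 1) (n r e : ℕ) : 0 ≤ trm ε n r e := by
  unfold trm
  have : (0:ℝ) ≤ 1 - ε := by linarith
  positivity

lemma trm_le_frm (h0 : 0 ≤ ε) (h1 : ε < 1) (n r e : ℕ) : trm ε n r e ≤ frm ε r e := by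
  unfold trm frm
  have h2 : (0:ℝ) ≤ 1 - ε := by linarith
  have hmin : ((min ((r+e)^2) (n^2) : ℕ) : ℝ) ≤ (((r+e)^2 : ℕ) : ℝ) :=
    Nat.cast_le.mpr (min_le_left _ _)
  have hc : (0:ℝ) ≤ ((r+e-1).choose e : ℝ) := Nat.cast_nonneg _
  have he : (0:ℝ) ≤ ε^e := by positivity
  have hr : (0:ℝ) ≤ (1-ε)^r := by positivity
  gcongr

lemma summable_trm (h0 : 0 ≤ ε) (h1 : ε < 1) (r : ℕ) (hr : 1 ≤ r) (n : ℕ) :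
    Summable (fun e => trm ε n r e) :=
  Summable.of_nonneg_of_le (trm_nonneg h0 h1 n r) (trm_le_frm h0 h1 n r)
    (hasSum_negbinom_sq h0 h1 r hr).summable

lemma tsum_trm_nonneg (h0 : 0 ≤ ε) (h1 : ε < 1) (n r : ℕ) :
    0 ≤ ∑' e, trm ε n r e := tsum_nonneg (trm_nonneg h0 h1 n r)

lemma tsum_trm_le (h0 : 0 ≤ ε) (h1 : ε < 1) (r : ℕ) (hr : 1 ≤ r) (n : ℕ) :
    ∑' e, trm ε n r e ≤ ((r:ℝ)^2 + ε*(r:ℝ)) / (1-ε)^2 := by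
  have h := Summable.tsum_le_tsum (trm_le_frm h0 h1 n r) (summable_trm h0 h1 r hr n)
    (hasSum_negbinom_sq h0 h1 r hr).summable
  exact h.trans (le_of_eq (hasSum_negbinom_sq h0 h1 r hr).tsum_eq)

lemma tendsto_tsum_trm (h0 : 0 ≤ ε) (h1 : ε < 1) (r : ℕ) (hr : 1 ≤ r) :
    Tendsto (fun n => ∑' e, trm ε n r e) atTop
      (nhds (((r:ℝ)^2 + ε*(r:ℝ)) / (1-ε)^2)) := by
  rw [← (hasSum_negbinom_sq h0 h1 r hr).tsum_eq]
  refine tendsto_tsum_of_dominated_convergence (f := fun n e => trm ε n r e)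
    (bound := frm ε r) (hasSum_negbinom_sq h0 h1 r hr).summable (fun e => ?_) ?_
  · refine Tendsto.congr' ?_ (tendsto_const_nhds (x := frm ε r e))
    filter_upwards [eventually_ge_atTop (r+e)] with n hn
    have : min ((r+e)^2) (n^2) = (r+e)^2 :=
      min_eq_left (Nat.pow_le_pow_left hn 2)
    unfold trm frm
    rw [this]
  · filter_upwards with n
    intro e
    rw [Real.norm_eq_abs, abs_of_nonneg (trm_nonneg h0 h1 n r e)]
    exact trm_le_frm h0 h1 n r e

end Trunc

lemma PM_eq (k n r : ℕ) (hkr : k ≤ r) (hrn : r ≤ n) :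
    PM k n r = (2⁻¹:ℝ)^(r-k) * (Q (n-k) / Q (r-k)) := by
  have hfst : (2:ℝ) ^ ((k : ℤ) - (r : ℤ)) = (2⁻¹:ℝ)^(r-k) := by
    have he : (k:ℤ) - (r:ℤ) = -((r-k : ℕ) : ℤ) := by omega
    rw [he, zpow_neg, zpow_natCast, inv_pow]
  have key : Q (n-k) = Q (r-k) * ∏ l ∈ Finset.range (n-r), (1 - (2⁻¹:ℝ)^((r-k)+l+1)) := by
    rw [show n-k = (r-k) + (n-r) from by omega]
    simp only [Q]
    rw [Finset.prod_range_add]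
  have hprod : ∏ l ∈ Finset.range (n-r), (1 - (2:ℝ)^((l:ℤ) - ((n:ℤ)-(k:ℤ))))
      = ∏ l ∈ Finset.range (n-r), (1 - (2⁻¹:ℝ)^((r-k)+l+1)) := by
    rw [← Finset.prod_range_reflect (fun l => (1 - (2⁻¹:ℝ)^((r-k)+l+1))) (n-r)]
    refine Finset.prod_congr rfl fun l hl => ?_
    rw [Finset.mem_range] at hl
    have he : (l:ℤ) - ((n:ℤ)-(k:ℤ)) = -(((r-k) + (n-r-1-l) + 1 : ℕ) : ℤ) := by
      push_cast
      omega
    rw [he, zpow_neg, zpow_natCast, inv_pow]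
  rw [PM, hfst, hprod, key]
  congr 1
  rw [mul_div_assoc, mul_comm]
  exact (div_mul_cancel₀ _ (Q_pos (r-k)).ne').symm


lemma Icc_eq_map (k n : ℕ) (hkn : k ≤ n) :
    Finset.Icc k n = (Finset.range (n-k+1)).map
      ⟨fun m => k + m, add_right_injective k⟩ := by
  ext x
  simp only [Finset.mem_Icc, Finset.mem_map, Finset.mem_range, Function.Embedding.coeFn_mk]
  constructor
  · rintro ⟨h1, h2⟩; exact ⟨x - k, by omega, by omega⟩
  · rintro ⟨a, ha, rfl⟩
    omega

end SecondMomentAux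

open SecondMomentAux in
theorem second_moment_round_length_limit (k : ℕ) (hk : 1 ≤ k) (ε : ℝ)
    (h₀ : 0 ≤ ε) (h₁ : ε < 1) :
    Tendsto
      (fun n : ℕ => ∑ r ∈ Finset.Icc k n, ∑' e : ℕ,
        (min ((r + e) ^ 2) (n ^ 2) : ℝ) * (Nat.choose (r + e - 1) e : ℝ) * ε ^ e *
          (1 - ε) ^ r * PM k n r)
      atTop
      (nhds ((((k : ℝ) + c₀) ^ 2 + ((k : ℝ) + c₀) * ε + c₀ + c₁) / (1 - ε) ^ 2)) := by
  have hQinf := Qinf_pos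
  have hne : (1:ℝ) - ε ≠ 0 := by linarith
  -- the dominating/limit function
  set u : ℕ → ℝ := fun m => (2⁻¹:ℝ)^m / Q m with hu
  set Bv : ℕ → ℝ := fun m => ((((k+m:ℕ)):ℝ)^2 + ε*(((k+m:ℕ)):ℝ)) / (1-ε)^2 with hBv
  have hu_nonneg : ∀ m, 0 ≤ u m := fun m => by
    have := Q_pos m; rw [hu]; positivity
  have hBv_nonneg : ∀ m, 0 ≤ Bv m := fun m => by
    rw [hBv]
    have h2 : (0:ℝ) ≤ (((k+m:ℕ)):ℝ) := Nat.cast_nonneg _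
    positivity
  -- HasSum of the limit function
  have hB : HasSum (fun m => Bv m * u m)
      ((((k:ℝ)^2 + ε*k) * (1/Qinf) + (2*(k:ℝ)+ε) * (c₀/Qinf)
        + (c₀^2+c₀+c₁)/Qinf) / (1-ε)^2) := by
    have h := ((hasSum_u0.mul_left ((k:ℝ)^2 + ε*k)).add
      (hasSum_u1.mul_left (2*(k:ℝ)+ε))).add hasSum_u2
    have h2 := h.div_const ((1-ε)^2)
    refine h2.congr_fun fun m => ?_
    rw [hBv, hu]
    push_cast
    ring
  -- pointwise limits of the summands
  have hab : ∀ m : ℕ, Tendsto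
      (fun n => if m ≤ n - k then (∑' e, trm ε n (k+m) e) * u m else 0) atTop
      (nhds (Bv m * u m)) := by
    intro m
    have ht := (tendsto_tsum_trm h₀ h₁ (k+m) (by omega)).mul_const (u m)
    rw [show ((((k+m:ℕ)):ℝ)^2 + ε*(((k+m:ℕ)):ℝ)) / (1-ε)^2 * u m = Bv m * u m from by
      rw [hBv]]
    at ht
    refine Tendsto.congr' ?_ ht
    filter_upwards [eventually_ge_atTop (k+m)] with n hn
    rw [if_pos (by omega)]
  -- uniform bound
  have hbd : ∀ n : ℕ, ∀ m : ℕ,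
      ‖if m ≤ n - k then (∑' e, trm ε n (k+m) e) * u m else 0‖ ≤ Bv m * u m := by
    intro n m
    by_cases h : m ≤ n - k
    · rw [if_pos h, Real.norm_eq_abs, abs_of_nonneg
        (mul_nonneg (tsum_trm_nonneg h₀ h₁ n (k+m)) (hu_nonneg m))]
      refine mul_le_mul_of_nonneg_right ?_ (hu_nonneg m)
      have := tsum_trm_le h₀ h₁ (k+m) (by omega) n
      rw [hBv]
      exact this
    · rw [if_neg h, norm_zero]
      exact mul_nonneg (hBv_nonneg m) (hu_nonneg m)
  -- the inner tsum limit
  have htsum : Tendsto (fun n => ∑' m : ℕ,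
      (if m ≤ n - k then (∑' e, trm ε n (k+m) e) * u m else 0)) atTop
      (nhds (∑' m, Bv m * u m)) := by
    refine tendsto_tsum_of_dominated_convergence hB.summable hab ?_
    filter_upwards with n using hbd n
  -- combine with Q (n - k) → Qinf
  have hQt : Tendsto (fun n : ℕ => Q (n - k)) atTop (nhds Qinf) :=
    Q_tendsto.comp (tendsto_sub_atTop_nat k)
  have hmain := hQt.mul htsum
  -- identify the limit value
  have hval : Qinf * (∑' m, Bv m * u m)
      = (((k : ℝ) + c₀) ^ 2 + ((k : ℝ) + c₀) * ε + c₀ + c₁) / (1 - ε) ^ 2 := by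
    rw [hB.tsum_eq]
    field_simp
    ring
  rw [← hval]
  refine Tendsto.congr' ?_ hmain
  -- eventual equality of the functions
  filter_upwards [eventually_ge_atTop k] with n hn
  have hstep1 : ∀ r ∈ Finset.Icc k n,
      (∑' e : ℕ, (min ((r + e) ^ 2) (n ^ 2) : ℝ) * (Nat.choose (r + e - 1) e : ℝ) * ε ^ e *
        (1 - ε) ^ r * PM k n r)
      = (∑' e, trm ε n r e) * PM k n r := by
    intro r _
    rw [← tsum_mul_right]
    refine tsum_congr fun e => ?_
    unfold trm
    rw [Nat.cast_min]
    push_cast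
    ring
  refine Eq.symm ?_
  rw [Finset.sum_congr rfl hstep1, Icc_eq_map k n hn, Finset.sum_map]
  simp only [Function.Embedding.coeFn_mk]
  have hstep2 : ∀ m ∈ Finset.range (n-k+1),
      (∑' e, trm ε n (k+m) e) * PM k n (k+m)
        = Q (n-k) * ((∑' e, trm ε n (k+m) e) * u m) := by
    intro m hm
    rw [Finset.mem_range] at hm
    rw [PM_eq k n (k+m) (by omega) (by omega), show k+m-k = m from by omega, hu]
    have := (Q_pos m).ne'
    field_simp
  rw [show (∑ m ∈ Finset.range (n-k+1), (∑' e, trm ε n (k+m) e) * PM k n (k+m))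
      = ∑ m ∈ Finset.range (n-k+1), Q (n-k) * ((∑' e, trm ε n (k+m) e) * u m) from
    Finset.sum_congr rfl hstep2]
  rw [← Finset.mul_sum]
  congr 1
  have hfin : ∀ m ∈ Finset.range (n-k+1), (∑' e, trm ε n (k+m) e) * u m
      = (if m ≤ n - k then (∑' e, trm ε n (k+m) e) * u m else 0) := by
    intro m hm
    rw [Finset.mem_range] at hm
    rw [if_pos (by omega)]
  rw [show (∑ m ∈ Finset.range (n-k+1), (∑' e, trm ε n (k+m) e) * u m)
      = ∑ m ∈ Finset.range (n-k+1),
          (if m ≤ n - k then (∑' e, trm ε n (k+m) e) * u m else 0) from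
    Finset.sum_congr rfl hfin]
  refine (tsum_eq_sum fun m hm => ?_).symm
  rw [Finset.mem_range] at hm
  exact if_neg (by omega)
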